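/- Let d ≥ 1, p ≥ 1, let g : Fin d → Fin p be a surjective grouping map (encoding a partition ω of d with parts ω_k = |g⁻¹(k)|), and let n : Fin p → ℕ with n k ≥ 1. Let S^ω be the subspace of ω-partially-symmetric tensors, i.e., tensors T : (Π i : Fin d, Fin (n (g i))) → ℝ with T(idx ∘ σ) = T(idx) for every permutation σ of Fin d satisfying g ∘ σ = g and every multi-index idx, and let C' be the set of ω-symmetric rank one tensors, i.e., tensors of the form idx ↦ ε · ∏_{i} (z (g i))(idx i) for ε ∈ {+1, −1} and vectors z k ∈ ℝ^{n k}. Then for almost every T ∈ S^ω (with respect to the Haar/Lebesgue measure on the finite-dimensional subspace S^ω) there exists a unique S ∈ C' with ‖T − S‖ = dist(T, C') in the Hilbert–Schmidt norm; that is, almost every ω-partially-symmetric tensor has a unique best ω-symmetric rank one approximation. -/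

import Mathlib

open MeasureTheory

/-- The space of `d`-mode real tensors with dimensions `n (g i)` in mode `i`,
equipped with the Hilbert–Schmidt (Euclidean) norm. -/
abbrev TensorSpace (d p : ℕ) (g : Fin d → Fin p) (n : Fin p → ℕ) :=
  EuclideanSpace ℝ (∀ i : Fin d, Fin (n (g i)))

/-- The subspace `S^ω` of tensors which are partially symmetric with respect to
the partition of `[d]` encoded by the grouping map `g`: tensors invariant under
precomposition of indices with every permutation `σ` of `Fin d` with `g ∘ σ = g`. -/
def Somega (d p : ℕ) (g : Fin d → Fin p) (n : Fin p → ℕ) :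
    Submodule ℝ (TensorSpace d p g n) where
  carrier := {T | ∀ σ : Equiv.Perm (Fin d), ∀ hσ : ∀ j, g (σ j) = g j,
    ∀ idx : ∀ i : Fin d, Fin (n (g i)),
      T (fun j => Fin.cast (congrArg n (hσ j)) (idx (σ j))) = T idx}
  add_mem' := by
    intro a b ha hb σ hσ idx
    show a _ + b _ = a idx + b idx
    rw [ha σ hσ idx, hb σ hσ idx]
  zero_mem' := by intro σ hσ idx; rfl
  smul_mem' := by
    intro c a ha σ hσ idx
    show c • a _ = c • a idx
    rw [ha σ hσ idx]

/-- The set of `ω`-symmetric rank one tensors `idx ↦ ε ∏ᵢ (z (g i))(idxᵢ)`,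
`ε = ±1`. -/
def omegaSymRankOne (d p : ℕ) (g : Fin d → Fin p) (n : Fin p → ℕ) :
    Set (TensorSpace d p g n) :=
  {S | ∃ ε : ℝ, (ε = 1 ∨ ε = -1) ∧ ∃ z : ∀ k, Fin (n k) → ℝ,
    ∀ idx, S idx = ε * ∏ i, z (g i) (idx i)}

open Metric Finset Filter Topology

section Helpers

variable {d p : ℕ} {g : Fin d → Fin p} {n : Fin p → ℕ}

lemma cast_apply_aux (z : ∀ k : Fin p, Fin (n k) → ℝ) (k k' : Fin p) (h : k' = k)
    (a : Fin (n k')) : z k (Fin.cast (congrArg n h) a) = z k' a := by subst h; rfl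

lemma omegaSymRankOne_subset_Somega :
    omegaSymRankOne d p g n ⊆ (Somega d p g n : Set (TensorSpace d p g n)) := by
  rintro S ⟨ε, hε, z, hz⟩ σ hσ idx
  rw [hz, hz]
  congr 1
  rw [← Equiv.prod_comp σ fun i => z (g i) (idx i)]
  refine Finset.prod_congr rfl fun i _ => ?_
  exact cast_apply_aux z (g i) (g (σ i)) (hσ i) (idx (σ i))

lemma zero_mem_omegaSymRankOne (hd : 1 ≤ d) : (0 : TensorSpace d p g n) ∈ omegaSymRankOne d p g n := by
  refine ⟨1, Or.inl rfl, fun k => 0, fun idx => ?_⟩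
  have : Nonempty (Fin d) := ⟨⟨0, hd⟩⟩
  simp [Finset.prod_eq_zero (Finset.mem_univ (Classical.arbitrary (Fin d)))]


-- compactness of unit set
lemma isCompact_unitQ (n : Fin p → ℕ) :
    IsCompact {w : ∀ k, Fin (n k) → ℝ | ∀ k, ∑ a, (w k a) ^ 2 = 1} := by
  have : {w : ∀ k, Fin (n k) → ℝ | ∀ k, ∑ a, (w k a) ^ 2 = 1}
      = Set.pi Set.univ (fun k => {v : Fin (n k) → ℝ | ∑ a, (v a) ^ 2 = 1}) := by
    ext w; simp [Set.mem_pi]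
  rw [this]
  apply isCompact_univ_pi
  intro k
  apply Metric.isCompact_of_isClosed_isBounded
  · exact isClosed_eq (by continuity) continuous_const
  · rw [Metric.isBounded_iff_subset_closedBall 0]
    refine ⟨1, fun v hv => ?_⟩
    simp only [Metric.mem_closedBall, dist_zero_right]
    rw [pi_norm_le_iff_of_nonneg zero_le_one]
    intro a
    have h1 : (v a) ^ 2 ≤ 1 := by
      rw [← hv]
      exact Finset.single_le_sum (fun b _ => sq_nonneg (v b)) (Finset.mem_univ a)
    rw [Real.norm_eq_abs, ← Real.sqrt_one, ← Real.sqrt_sq_eq_abs]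
    exact Real.sqrt_le_sqrt h1

lemma norm_rankOne_unit {ε : ℝ} (hε : ε = 1 ∨ ε = -1) {w : ∀ k, Fin (n k) → ℝ}
    (hw : ∀ k, ∑ a, (w k a) ^ 2 = 1) (S : TensorSpace d p g n)
    (hS : ∀ idx, S idx = ε * ∏ i, w (g i) (idx i)) : ‖S‖ = 1 := by
  have hε2 : ε ^ 2 = 1 := by rcases hε with h | h <;> simp [h]
  have : ∑ idx : ∀ i : Fin d, Fin (n (g i)), ‖S idx‖ ^ 2 = 1 := by
    have e1 : ∀ idx : ∀ i : Fin d, Fin (n (g i)), ‖S idx‖ ^ 2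
        = ∏ i, (w (g i) (idx i)) ^ 2 := by
      intro idx
      rw [Real.norm_eq_abs, sq_abs, hS, mul_pow, hε2, one_mul, ← Finset.prod_pow]
    rw [Finset.sum_congr rfl (fun idx _ => e1 idx)]
    have := Finset.prod_univ_sum (fun i : Fin d => (Finset.univ : Finset (Fin (n (g i)))))
      (fun i a => (w (g i) a) ^ 2)
    rw [Fintype.piFinset_univ] at this
    rw [← this]
    simp [hw]
  rw [EuclideanSpace.norm_eq]; simp_rw [this]; exact Real.sqrt_one

lemma smul_mem_omegaSymRankOne (hd : 1 ≤ d) {r : ℝ} (hr : 0 ≤ r)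
    {S : TensorSpace d p g n} (hS : S ∈ omegaSymRankOne d p g n) :
    r • S ∈ omegaSymRankOne d p g n := by
  obtain ⟨ε, hε, z, hz⟩ := hS
  set i₀ : Fin d := ⟨0, hd⟩
  set k₀ := g i₀ with hk₀
  set m := (Finset.univ.filter (fun i => g i = k₀)).card with hm
  have hm0 : m ≠ 0 := by
    have : i₀ ∈ Finset.univ.filter (fun i => g i = k₀) := by simp [hk₀]
    intro h
    rw [hm] at h
    exact absurd (Finset.card_eq_zero.mp h ▸ this) (by simp)
  set c := r ^ ((m : ℝ)⁻¹) with hc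
  have hcm : c ^ m = r := Real.rpow_inv_natCast_pow hr hm0
  refine ⟨ε, hε, fun k a => (if k = k₀ then c else 1) * z k a, fun idx => ?_⟩
  have h1 : ∏ i, ((if g i = k₀ then c else 1) * z (g i) (idx i))
      = c ^ m * ∏ i, z (g i) (idx i) := by
    rw [Finset.prod_mul_distrib, Finset.prod_ite, Finset.prod_const, Finset.prod_const,
      one_pow, mul_one]
  rw [h1, hcm]
  have h2 : (r • S) idx = r * S idx := rfl
  rw [h2, hz]
  ring

lemma isClosed_omegaSymRankOne (hd : 1 ≤ d) (hg : Function.Surjective g) (hn : ∀ k, 1 ≤ n k) :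
    IsClosed (omegaSymRankOne d p g n) := by
  apply IsSeqClosed.isClosed
  intro Sm S hmem htend
  choose ε hε z hz using hmem
  have heQ : ∀ k, ∑ a, ((fun a => if a = (⟨0, hn k⟩ : Fin (n k)) then (1:ℝ) else 0) a) ^ 2 = 1 := by
    intro k
    simp [apply_ite (fun x : ℝ => x ^ 2)]
  have hchoice : ∀ m, ∃ (r : ℝ) (w : ∀ k, Fin (n k) → ℝ), 0 ≤ r ∧
      (∀ k, ∑ a, (w k a) ^ 2 = 1) ∧
      (∀ idx, Sm m idx = ε m * (r * ∏ i, w (g i) (idx i))) := by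
    intro m
    by_cases h0 : ∀ k, ∑ a, (z m k a) ^ 2 ≠ 0
    · set q : Fin p → ℝ := fun k => Real.sqrt (∑ a, (z m k a) ^ 2) with hqdef
      have hq : ∀ k, 0 < q k := fun k => Real.sqrt_pos.mpr
        (lt_of_le_of_ne (Finset.sum_nonneg fun a _ => sq_nonneg _) (Ne.symm (h0 k)))
      have hq2 : ∀ k, (q k) ^ 2 = ∑ a, (z m k a) ^ 2 := fun k =>
        Real.sq_sqrt (Finset.sum_nonneg fun a _ => sq_nonneg _)
      refine ⟨∏ i, q (g i), fun k a => (q k)⁻¹ * z m k a,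
        Finset.prod_nonneg fun i _ => (hq _).le, fun k => ?_, fun idx => ?_⟩
      · simp_rw [mul_pow, ← Finset.mul_sum]
        rw [← hq2 k, inv_pow]
        exact inv_mul_cancel₀ (pow_ne_zero 2 (hq k).ne')
      · rw [hz m idx]
        congr 1
        rw [Finset.prod_mul_distrib, Finset.prod_inv_distrib, ← mul_assoc,
          mul_inv_cancel₀ (Finset.prod_ne_zero_iff.mpr fun i _ => (hq _).ne'), one_mul]
    · push_neg at h0
      obtain ⟨k, hk⟩ := h0
      obtain ⟨i, hi⟩ := hg k
      subst hi
      have hzk : ∀ a, z m (g i) a = 0 := by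
        intro a
        have := (Finset.sum_eq_zero_iff_of_nonneg (fun b _ => sq_nonneg (z m (g i) b))).mp hk
          a (Finset.mem_univ a)
        exact pow_eq_zero_iff two_ne_zero |>.mp this
      refine ⟨0, fun k a => if a = (⟨0, hn k⟩ : Fin (n k)) then (1:ℝ) else 0,
        le_refl 0, heQ, fun idx => ?_⟩
      rw [hz m idx]
      rw [Finset.prod_eq_zero (Finset.mem_univ i) (hzk _)]
      ring
  choose r w hr hwQ hSw using hchoice
  -- r m = ‖Sm m‖
  have hrnorm : ∀ m, r m = ‖Sm m‖ := by
    intro m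
    set Φ : TensorSpace d p g n := (WithLp.equiv 2 _).symm
      (fun idx => ε m * ∏ i, w m (g i) (idx i)) with hΦ
    have hΦap : ∀ idx, Φ idx = ε m * ∏ i, w m (g i) (idx i) := fun idx => by rw [hΦ]; rfl
    have hSmeq : Sm m = r m • Φ := by
      ext idx
      rw [hSw m idx]
      show _ = r m * Φ idx
      rw [hΦap]; ring
    rw [hSmeq, norm_smul, norm_rankOne_unit (hε m) (hwQ m) Φ hΦap,
      mul_one, Real.norm_eq_abs, abs_of_nonneg (hr m)]
  -- compact set
  have hK : IsCompact (({1, -1} : Set ℝ) ×ˢ {w : ∀ k, Fin (n k) → ℝ | ∀ k, ∑ a, (w k a) ^ 2 = 1}) :=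
    ((Set.toFinite ({1,-1} : Set ℝ)).isCompact).prod (isCompact_unitQ n)
  obtain ⟨⟨ε', w'⟩, hmemK, φ, hφ, hconv⟩ := hK.tendsto_subseq
    (x := fun m => (ε m, w m)) (fun m => ⟨hε m, hwQ m⟩)
  have hεconv : Filter.Tendsto (fun m => ε (φ m)) Filter.atTop (nhds ε') :=
    (continuous_fst.tendsto _).comp hconv
  have hwconv : Filter.Tendsto (fun m => w (φ m)) Filter.atTop (nhds w') :=
    (continuous_snd.tendsto _).comp hconv
  have hSconv : Filter.Tendsto (fun m => Sm (φ m)) Filter.atTop (nhds S) :=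
    htend.comp hφ.tendsto_atTop
  have hrconv : Filter.Tendsto (fun m => r (φ m)) Filter.atTop (nhds ‖S‖) := by
    simp_rw [hrnorm]
    exact (continuous_norm.tendsto _).comp hSconv
  -- pointwise limit identity
  have hid : ∀ idx, S idx = ε' * (‖S‖ * ∏ i, w' (g i) (idx i)) := by
    intro idx
    have hL : Filter.Tendsto (fun m => Sm (φ m) idx) Filter.atTop (nhds (S idx)) :=
      ((EuclideanSpace.proj idx).continuous.tendsto _).comp hSconv
    have hprod : Filter.Tendsto (fun m => ∏ i, w (φ m) (g i) (idx i)) Filter.atTop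
        (nhds (∏ i, w' (g i) (idx i))) := by
      apply tendsto_finset_prod
      intro i _
      exact (((continuous_apply (idx i)).comp (continuous_apply (g i))).tendsto _).comp hwconv
    have hR : Filter.Tendsto (fun m => ε (φ m) * (r (φ m) * ∏ i, w (φ m) (g i) (idx i)))
        Filter.atTop (nhds (ε' * (‖S‖ * ∏ i, w' (g i) (idx i)))) :=
      hεconv.mul (hrconv.mul hprod)
    have : (fun m => Sm (φ m) idx) = fun m => ε (φ m) * (r (φ m) * ∏ i, w (φ m) (g i) (idx i)) :=
      funext fun m => hSw (φ m) idx
    rw [this] at hL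
    exact tendsto_nhds_unique hL hR
  -- conclude
  have hε' : ε' = 1 ∨ ε' = -1 := hmemK.1
  set S₀ : TensorSpace d p g n := (WithLp.equiv 2 _).symm
    (fun idx => ε' * ∏ i, w' (g i) (idx i)) with hS₀
  have hS₀ap : ∀ idx, S₀ idx = ε' * ∏ i, w' (g i) (idx i) := fun idx => by rw [hS₀]; rfl
  have hS₀mem : S₀ ∈ omegaSymRankOne d p g n := ⟨ε', hε', w', hS₀ap⟩
  have : S = ‖S‖ • S₀ := by
    ext idx
    rw [hid idx]
    show _ = ‖S‖ * S₀ idx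
    rw [hS₀ap]
    ring
  rw [this]
  exact smul_mem_omegaSymRankOne hd (norm_nonneg S) hS₀mem

end Helpers

section MainHelpers

variable {d p : ℕ} {g : Fin d → Fin p} {n : Fin p → ℕ}

/-- the directional-derivative characterization of nearest points at
differentiability points of the distance function. -/
lemma key_nearest (C : Set (TensorSpace d p g n)) (hsub : C ⊆ (Somega d p g n : Set _))
    (x : Somega d p g n)
    (hx : DifferentiableAt ℝ (fun y : Somega d p g n => infDist (y : TensorSpace d p g n) C) x)
    (c' : TensorSpace d p g n) (hc'C : c' ∈ C)
    (hc'd : dist (x : TensorSpace d p g n) c' = infDist (x : TensorSpace d p g n) C) :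
    ∃ u : Somega d p g n, ((x + u : Somega d p g n) : TensorSpace d p g n) = c' ∧
      ‖u‖ = infDist (x : TensorSpace d p g n) C ∧
      fderiv ℝ (fun y : Somega d p g n => infDist (y : TensorSpace d p g n) C) x u
        = - infDist (x : TensorSpace d p g n) C := by
  classical
  set F : Somega d p g n → ℝ := fun y => infDist (y : TensorSpace d p g n) C with hF
  set D : ℝ := infDist (x : TensorSpace d p g n) C with hD
  set ch : Somega d p g n := ⟨c', hsub hc'C⟩ with hch
  set u : Somega d p g n := ch - x with hu
  have hucoe : (u : TensorSpace d p g n) = c' - (x : TensorSpace d p g n) := by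
    rw [hu]; push_cast; rfl
  refine ⟨u, ?_, ?_, ?_⟩
  · push_cast [hucoe]; abel
  · rw [show ‖u‖ = dist ch x from by rw [hu, dist_eq_norm], Subtype.dist_eq, hch, dist_comm]
    exact hc'd
  · -- the line argument
    have hline : ∀ t : ℝ, t ∈ Set.Ioo (0:ℝ) 1 → F (x + t • u) = (1 - t) * D := by
      intro t ht
      have hcoe : ((x + t • u : Somega d p g n) : TensorSpace d p g n)
          = (x : TensorSpace d p g n) + t • (c' - (x : TensorSpace d p g n)) := by
        push_cast [hucoe]; rfl
      have hdxc : ‖(x : TensorSpace d p g n) - c'‖ = D := by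
        rw [← dist_eq_norm]; exact hc'd
      have hupper : F (x + t • u) ≤ (1 - t) * D := by
        have h1 : F (x + t • u) ≤ dist (((x + t • u : Somega d p g n)) : TensorSpace d p g n) c' :=
          infDist_le_dist_of_mem hc'C
        have h2 : dist (((x + t • u : Somega d p g n)) : TensorSpace d p g n) c'
            = (1 - t) * D := by
          rw [hcoe, dist_eq_norm]
          have : (x : TensorSpace d p g n) + t • (c' - (x : TensorSpace d p g n)) - c'
              = (1 - t) • ((x : TensorSpace d p g n) - c') := by module
          rw [this, norm_smul, Real.norm_eq_abs, abs_of_nonneg (by linarith [ht.2]), hdxc]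
        rw [← h2]; exact h1
      have hlower : (1 - t) * D ≤ F (x + t • u) := by
        have h1 : D ≤ F (x + t • u) + dist ((x : TensorSpace d p g n))
            (((x + t • u : Somega d p g n)) : TensorSpace d p g n) := by
          rw [hD]
          exact infDist_le_infDist_add_dist
        have h2 : dist ((x : TensorSpace d p g n))
            (((x + t • u : Somega d p g n)) : TensorSpace d p g n) = t * D := by
          rw [hcoe, dist_eq_norm]
          have : (x : TensorSpace d p g n) - ((x : TensorSpace d p g n)
              + t • (c' - (x : TensorSpace d p g n))) = t • ((x : TensorSpace d p g n) - c') := by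
            module
          rw [this, norm_smul, Real.norm_eq_abs, abs_of_nonneg (le_of_lt ht.1), hdxc]
        linarith [h1, h2.le, h2.ge]
      linarith
    have hγ : HasDerivAt (fun t : ℝ => x + t • u) u 0 := by
      simpa using ((hasDerivAt_id (0:ℝ)).smul_const u).const_add x
    have hFd : HasFDerivAt F (fderiv ℝ F x) (x + (0:ℝ) • u) := by
      rw [zero_smul, add_zero]; exact hx.hasFDerivAt
    have hcomp : HasDerivAt (fun t : ℝ => F (x + t • u)) (fderiv ℝ F x u) 0 :=
      hFd.comp_hasDerivAt (f := fun t : ℝ => x + t • u) 0 hγ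
    have hslope := hasDerivAt_iff_tendsto_slope.mp hcomp
    have h2 : Tendsto (slope (fun t : ℝ => F (x + t • u)) 0) (𝓝[>] (0:ℝ))
        (𝓝 (fderiv ℝ F x u)) :=
      hslope.mono_left (nhdsWithin_mono 0 fun t ht => ne_of_gt ht)
    have h3 : Tendsto (slope (fun t : ℝ => F (x + t • u)) 0) (𝓝[>] (0:ℝ)) (𝓝 (-D)) := by
      refine Tendsto.congr' ?_ (tendsto_const_nhds (x := -D))
      filter_upwards [Ioo_mem_nhdsGT_of_mem (Set.mem_Ico.mpr ⟨le_refl (0:ℝ), one_pos⟩)] with t ht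
      have ht0 : t ≠ 0 := ne_of_gt ht.1
      rw [slope_def_field, hline t ht]
      have hf0 : F (x + (0:ℝ) • u) = D := by rw [zero_smul, add_zero, hF]
      rw [hf0]
      field_simp
      ring
    exact tendsto_nhds_unique h2 h3

end MainHelpers

set_option maxHeartbeats 1000000 in
/-- Almost every `ω`-partially-symmetric tensor (w.r.t. Haar/Lebesgue measure on
the subspace `S^ω`) has a unique best `ω`-symmetric rank one approximation. -/
theorem ae_unique_best_omega_symmetric_rank_one_approx
    (d p : ℕ) (hd : 1 ≤ d) (hp : 1 ≤ p) (g : Fin d → Fin p)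
    (hg : Function.Surjective g) (n : Fin p → ℕ) (hn : ∀ k, 1 ≤ n k)
    (μ : Measure (Somega d p g n)) [μ.IsAddHaarMeasure] :
    ∀ᵐ (T : Somega d p g n) ∂μ, ∃! S, S ∈ omegaSymRankOne d p g n ∧
      dist (T : TensorSpace d p g n) S =
        Metric.infDist (T : TensorSpace d p g n) (omegaSymRankOne d p g n) := by
  have hC0 : (0 : TensorSpace d p g n) ∈ omegaSymRankOne d p g n := zero_mem_omegaSymRankOne hd
  have hCc : IsClosed (omegaSymRankOne d p g n) := isClosed_omegaSymRankOne hd hg hn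
  have hFlip : LipschitzWith 1
      (fun y : Somega d p g n => infDist (y : TensorSpace d p g n) (omegaSymRankOne d p g n)) := by
    have h1 : LipschitzWith 1 (fun y : Somega d p g n => (y : TensorSpace d p g n)) :=
      (Somega d p g n).subtypeₗᵢ.lipschitz
    have h2 := (lipschitz_infDist_pt (omegaSymRankOne d p g n)).comp h1
    rw [mul_one] at h2
    exact h2
  filter_upwards [hFlip.ae_differentiableAt (μ := μ)] with x hx
  obtain ⟨c, hcC, hc⟩ := hCc.exists_infDist_eq_dist ⟨0, hC0⟩ (x : TensorSpace d p g n)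
  refine ⟨c, ⟨hcC, hc.symm⟩, ?_⟩
  rintro c₂ ⟨hc₂C, hc₂d⟩
  obtain ⟨u₁, hu₁e, hu₁n, hu₁φ⟩ :=
    key_nearest _ omegaSymRankOne_subset_Somega x hx c₂ hc₂C hc₂d
  obtain ⟨u₂, hu₂e, hu₂n, hu₂φ⟩ :=
    key_nearest _ omegaSymRankOne_subset_Somega x hx c hcC hc.symm
  set D := infDist (x : TensorSpace d p g n) (omegaSymRankOne d p g n) with hD
  have hD0 : (0:ℝ) ≤ D := infDist_nonneg
  set φ := fderiv ℝ
    (fun y : Somega d p g n => infDist (y : TensorSpace d p g n) (omegaSymRankOne d p g n)) x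
    with hφ
  have hφn : ‖φ‖ ≤ 1 := by
    have := norm_fderiv_le_of_lipschitz ℝ hFlip (x₀ := x)
    simpa using this
  have hsum : 2 * D ≤ ‖u₁ + u₂‖ := by
    have he : φ (u₁ + u₂) = -(2*D) := by rw [map_add, hu₁φ, hu₂φ]; ring
    have h2 : |φ (u₁+u₂)| ≤ ‖u₁+u₂‖ := by
      calc |φ (u₁+u₂)| = ‖φ (u₁+u₂)‖ := (Real.norm_eq_abs _).symm
        _ ≤ ‖φ‖ * ‖u₁+u₂‖ := φ.le_opNorm _
        _ ≤ 1 * ‖u₁+u₂‖ := mul_le_mul_of_nonneg_right hφn (norm_nonneg _)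
        _ = ‖u₁+u₂‖ := one_mul _
    rw [he, abs_neg, abs_of_nonneg (by linarith)] at h2
    linarith
  have hu12 : u₁ = u₂ := by
    have e1 := norm_add_sq_real u₁ u₂
    have e2 := norm_sub_sq_real u₁ u₂
    rw [hu₁n, hu₂n] at e1 e2
    have h4 : 4*(D^2) ≤ ‖u₁+u₂‖^2 := by
      have h5 := mul_le_mul hsum hsum (by linarith) (norm_nonneg (u₁+u₂))
      calc 4*(D^2) = (2*D)*(2*D) := by ring
        _ ≤ ‖u₁+u₂‖*‖u₁+u₂‖ := h5
        _ = ‖u₁+u₂‖^2 := (sq (‖u₁+u₂‖)).symm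
    have hpar : ‖u₁ - u₂‖^2 ≤ 0 := by linarith
    have hn0 : ‖u₁ - u₂‖ = 0 :=
      pow_eq_zero_iff two_ne_zero |>.mp (le_antisymm hpar (sq_nonneg _))
    exact sub_eq_zero.mp (norm_eq_zero.mp hn0)
  rw [← hu₁e, ← hu₂e, hu12]
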